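/- Let Q be a field, and let L and S be extensions of Q inside a common field, where L is a radical extension of Q and S is a finite Galois extension of Q. If both L and S are quasireal (characteristic zero and containing no roots of unity other than ±1), then [L ∩ S : Q] ≤ 2. -/

import Mathlib

/-- A field is quasireal if it has characteristic zero and its only roots of
unity are `±1`. -/
def IsQuasireal (L : Type*) [Field L] : Prop :=
  CharZero L ∧ ∀ ζ : L, (∃ n : ℕ, 0 < n ∧ ζ ^ n = 1) → ζ = 1 ∨ ζ = -1

/-- `B = A[α]` for some `α` with a positive power of `α` in `A`
(a single radical step, inside a fixed ambient extension `E` of `Q`). -/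
def RadicalStep (Q E : Type*) [Field Q] [Field E] [Algebra Q E]
    (A B : IntermediateField Q E) : Prop :=
  ∃ α : E, (∃ n : ℕ, 0 < n ∧ α ^ n ∈ A) ∧ B = A ⊔ IntermediateField.adjoin Q {α}

/-- `B` is obtained from `A` by a finite tower of radical extensions. -/
def IsRepeatedRadical (Q E : Type*) [Field Q] [Field E] [Algebra Q E]
    (A B : IntermediateField Q E) : Prop :=
  Relation.ReflTransGen (RadicalStep Q E) A B

open IntermediateField Polynomial Module

lemma quasireal_mem {Q E : Type*} [Field Q] [Field E] [Algebra Q E]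
    {L : IntermediateField Q E} (h : IsQuasireal L)
    {x : E} (hx : x ∈ L) {m : ℕ} (hm : 0 < m) (hxm : x ^ m = 1) :
    x = 1 ∨ x = -1 := by
  have := h.2 ⟨x, hx⟩ ⟨m, hm, by ext; push_cast; exact hxm⟩
  rcases this with h1 | h1
  · left; exact congrArg Subtype.val h1
  · right; exact congrArg Subtype.val h1

/-- key step: `α ^ [L : M] ∈ M` for `M ≤ L = Q(α)` quasireal, `α^n ∈ M`. -/
lemma pow_natDegree_mem {Q E : Type*} [Field Q] [Field E] [Algebra Q E]
    {α : E} (hα0 : α ≠ 0) {n : ℕ} (hn : 0 < n)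
    {M : IntermediateField Q E} (hML : M ≤ IntermediateField.adjoin Q {α})
    (hαn : α ^ n ∈ M)
    (hint : IsIntegral Q α)
    (hqr : IsQuasireal (IntermediateField.adjoin Q {α})) :
    α ^ (minpoly M α).natDegree ∈ M := by
  set L := IntermediateField.adjoin Q {α} with hLdef
  have hintM : IsIntegral M α := hint.tower_top
  set p := minpoly (↥M) α with hp
  set e := p.natDegree with he
  have he0 : 0 < e := minpoly.natDegree_pos hintM
  set a' : ↥M := ⟨α ^ n, hαn⟩ with ha'
  have hpdvd : p ∣ X ^ n - C a' := by
    apply minpoly.dvd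
    simp [ha', IntermediateField.algebraMap_apply]
  -- work in an algebraic closure
  set Abar := AlgebraicClosure E
  set f : (↥M) →+* Abar := (algebraMap E Abar).comp (algebraMap (↥M) E) with hf
  set P := p.map f with hP
  have hPm : P.Monic := (minpoly.monic hintM).map f
  have hPsp : P.Splits :=
    IsAlgClosed.splits P
  have hcard : Multiset.card P.roots = e := by
    rw [Polynomial.splits_iff_card_roots.1 hPsp, hP, Polynomial.natDegree_map]
  have hroots : ∀ r ∈ P.roots, r ^ n = f a' := by
    intro r hr
    have hr0 : P.eval r = 0 := (Polynomial.isRoot_of_mem_roots hr)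
    have hdvd2 : P ∣ (X ^ n - C a').map f := Polynomial.map_dvd f hpdvd
    have : ((X ^ n - C a').map f).eval r = 0 := by
      obtain ⟨q, hq⟩ := hdvd2
      rw [hq, Polynomial.eval_mul, hr0, zero_mul]
    simpa [sub_eq_zero] using this
  have hprodpow : P.roots.prod ^ n = f a' ^ e := by
    have h1 : (P.roots.map fun x => x ^ n).prod = P.roots.prod ^ n := by
      simpa using (Multiset.prod_map_pow (m := P.roots) (f := id) (n := n))
    have h2 : P.roots.map (fun x => x ^ n) = Multiset.replicate e (f a') := by
      refine Multiset.eq_replicate.2 ⟨by simp [hcard], ?_⟩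
      intro b hb
      obtain ⟨r, hr, rfl⟩ := Multiset.mem_map.1 hb
      exact hroots r hr
    rw [← h1, h2, Multiset.prod_replicate]
  have hcoeff : f (p.coeff 0) = (-1) ^ e * P.roots.prod := by
    have := hPsp.coeff_zero_eq_prod_roots_of_monic hPm
    rw [hP, Polynomial.coeff_map, Polynomial.natDegree_map] at this
    exact this
  -- the identity in Abar, pulled back to E
  have hE : ((p.coeff 0 : E)) ^ n = (-1) ^ (e * n) * α ^ (n * e) := by
    have hinj : Function.Injective (algebraMap E Abar) := (algebraMap E Abar).injective
    apply hinj
    have hthis : f (p.coeff 0) ^ n = ((-1 : Abar)) ^ (e * n) * f a' ^ e := by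
      rw [hcoeff, mul_pow, ← pow_mul, hprodpow]
    have hfa : f a' = algebraMap E Abar (α ^ n) := by
      simp [hf, ha', IntermediateField.algebraMap_apply]
    have hfc : f (p.coeff 0) = algebraMap E Abar (p.coeff 0 : E) := by
      simp [hf, IntermediateField.algebraMap_apply]
    rw [hfa, hfc] at hthis
    rw [map_pow, hthis]
    simp [map_mul, map_pow, pow_mul]
  -- u = c₀ / α^e is a root of unity in L
  set c : E := (p.coeff 0 : E) with hc
  have hcL : c ∈ L := hML (p.coeff 0).2
  have hαL : α ∈ L := IntermediateField.mem_adjoin_simple_self Q α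
  have hαe0 : α ^ e ≠ 0 := pow_ne_zero _ hα0
  set u : E := c / α ^ e with hu
  have huL : u ∈ L := div_mem (hML (p.coeff 0).2) (pow_mem hαL e)
  have hsq : c ^ (2 * n) = (α ^ e) ^ (2 * n) := by
    have h2 : c ^ (n * 2) = ((-1 : E) ^ (e * n)) ^ 2 * (α ^ (n * e)) ^ 2 := by
      rw [pow_mul, hE, mul_pow]
    have h3 : ((-1 : E) ^ (e * n)) ^ 2 = 1 := by
      rw [← pow_mul, mul_comm (e * n) 2, pow_mul, neg_one_sq, one_pow]
    rw [h3, one_mul] at h2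
    calc c ^ (2 * n) = c ^ (n * 2) := by rw [mul_comm]
      _ = (α ^ (n * e)) ^ 2 := h2
      _ = (α ^ e) ^ (2 * n) := by
          rw [← pow_mul, ← pow_mul, show n * e * 2 = e * (2 * n) by ring]
  have hupow : u ^ (2 * n) = 1 := by
    rw [hu, div_pow, hsq, div_self (pow_ne_zero _ hαe0)]
  have hu1 := quasireal_mem hqr huL (by positivity : 0 < 2 * n) hupow
  have hceq : c = u * α ^ e := by
    rw [hu, div_mul_cancel₀ _ hαe0]
  rcases hu1 with h1 | h1
  · rw [h1, one_mul] at hceq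
    rw [← hceq]
    exact (p.coeff 0).2
  · rw [h1] at hceq
    have hae : α ^ e = -c := by rw [hceq]; ring
    rw [hae]
    exact neg_mem (p.coeff 0).2

/-- If `γ ∈ S` with `S/Q` finite Galois quasireal and `γ^n` comes from `Q`,
then `deg (minpoly Q γ) ≤ 2`. -/
lemma minpoly_natDegree_le_two {Q E : Type*} [Field Q] [Field E] [Algebra Q E]
    [CharZero Q]
    {S : IntermediateField Q E} (hSgal : IsGalois Q S) (hSfin : FiniteDimensional Q S)
    (hSqr : IsQuasireal S)
    {γ : E} (hγ0 : γ ≠ 0) (hγS : γ ∈ S) {n : ℕ} (hn : 0 < n)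
    {b : Q} (hb : γ ^ n = algebraMap Q E b) :
    (minpoly Q γ).natDegree ≤ 2 := by
  classical
  set γ' : ↥S := ⟨γ, hγS⟩ with hγ'
  have hcoe : algebraMap (↥S) E γ' = γ := rfl
  have hmin : minpoly Q γ = minpoly Q γ' := by
    rw [← hcoe, minpoly.algebraMap_eq (algebraMap (↥S) E).injective]
  have hintγ' : IsIntegral Q γ' := IsIntegral.of_finite Q γ'
  have hγ'0 : γ' ≠ 0 := by
    intro h
    exact hγ0 (by simpa [hγ'] using congrArg Subtype.val h)
  have hγ'n : γ' ^ n = algebraMap Q (↥S) b := by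
    apply Subtype.ext
    push_cast
    rw [hb]
  set P := minpoly Q γ' with hPdef
  have hsplit : (P.map (algebraMap Q ↥S)).Splits := hSgal.to_normal.splits γ'
  have hsep : P.Separable := (minpoly.irreducible hintγ').separable
  set R := (P.map (algebraMap Q ↥S)).roots with hR
  have hcard : P.natDegree = Multiset.card R := by
    rw [← Polynomial.natDegree_map (algebraMap Q ↥S)]; exact hsplit.natDegree_eq_card_roots
  have hnodup : R.Nodup := Polynomial.nodup_roots (hsep.map)
  have hmem : ∀ r ∈ R, r = γ' ∨ r = -γ' := by
    intro r hr
    have hr0 : (P.map (algebraMap Q ↥S)).eval r = 0 := Polynomial.isRoot_of_mem_roots hr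
    have hPd : P ∣ X ^ n - C b := by
      apply minpoly.dvd
      simp [hγ'n]
    have : ((X ^ n - C b).map (algebraMap Q ↥S)).eval r = 0 := by
      obtain ⟨q, hq⟩ := Polynomial.map_dvd (algebraMap Q ↥S) hPd
      rw [hq, Polynomial.eval_mul, hr0, zero_mul]
    have hrn : r ^ n = algebraMap Q (↥S) b := by simpa [sub_eq_zero] using this
    have hdiv : (r / γ') ^ n = 1 := by
      rw [div_pow, hrn, ← hγ'n, div_self (pow_ne_zero _ hγ'0)]
    rcases hSqr.2 (r / γ') ⟨n, hn, hdiv⟩ with h1 | h1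
    · left; field_simp at h1; exact h1
    · right
      rw [div_eq_iff hγ'0] at h1
      rw [h1]; ring
  have hsub : R.toFinset ⊆ {γ', -γ'} := by
    intro r hr
    rcases hmem r (Multiset.mem_toFinset.1 hr) with h | h <;> simp [h]
  have : Multiset.card R = R.toFinset.card := (Multiset.toFinset_card_of_nodup hnodup).symm
  rw [hmin, hcard, this]
  calc R.toFinset.card ≤ ({γ', -γ'} : Finset ↥S).card := Finset.card_le_card hsub
    _ ≤ 2 := (Finset.card_insert_le _ _).trans (by simp)

/-- degree tower formula for subfields of a simple extension -/
lemma degree_aux {Q E : Type*} [Field Q] [Field E] [Algebra Q E] {α : E}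
    (hα : IsIntegral Q α) {N : IntermediateField Q E}
    (hN : N ≤ IntermediateField.adjoin Q {α}) :
    Module.finrank Q N * (minpoly N α).natDegree
      = Module.finrank Q (IntermediateField.adjoin Q {α}) := by
  have h1 := IntermediateField.finrank_bot_mul_relfinrank hN
  rw [IntermediateField.relfinrank_eq_finrank_of_le hN,
      IntermediateField.extendScalars_adjoin hN,
      IntermediateField.adjoin.finrank (hα.tower_top)] at h1
  exact h1

/-- If `L` is a radical extension of `Q` and `S` is a finite Galois extension of
`Q`, inside a common field `E`, and both `L` and `S` are quasireal, then
`[L ∩ S : Q] ≤ 2`. -/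
theorem stmt10 (Q E : Type*) [Field Q] [Field E] [Algebra Q E]
    (L S : IntermediateField Q E)
    (hLrad : ∃ α : E, (∃ n : ℕ, 0 < n ∧ α ^ n ∈ (⊥ : IntermediateField Q E)) ∧
      L = IntermediateField.adjoin Q {α})
    (hSgal : IsGalois Q S) (hSfin : FiniteDimensional Q S)
    (hLqr : IsQuasireal L) (hSqr : IsQuasireal S) :
    Module.finrank Q ↥(L ⊓ S) ≤ 2 := by
  obtain ⟨α, ⟨n, hn, hαn⟩, hL⟩ := hLrad
  subst hL
  by_cases hα0 : α = 0
  · subst hα0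
    have hbot : IntermediateField.adjoin Q {(0 : E)} ⊓ S = ⊥ := by
      rw [show IntermediateField.adjoin Q {(0 : E)} = ⊥ from IntermediateField.adjoin_zero,
        bot_inf_eq]
    rw [hbot, IntermediateField.finrank_bot]
    omega
  · obtain ⟨q, hq⟩ := (IntermediateField.mem_bot).1 hαn
    haveI : CharZero (↥S) := hSqr.1
    haveI : CharZero Q := (algebraMap Q ↥S).charZero
    have hint : IsIntegral Q α := by
      refine ⟨X ^ n - C q, Polynomial.monic_X_pow_sub_C q hn.ne', ?_⟩
      simp [hq]
    have hML : IntermediateField.adjoin Q {α} ⊓ S ≤ IntermediateField.adjoin Q {α} :=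
      inf_le_left
    have hintM : IsIntegral (↥(IntermediateField.adjoin Q {α} ⊓ S)) α := hint.tower_top
    set e := (minpoly (↥(IntermediateField.adjoin Q {α} ⊓ S)) α).natDegree with hedef
    have he0 : 0 < e := minpoly.natDegree_pos hintM
    have hbotle : (⊥ : IntermediateField Q E) ≤ IntermediateField.adjoin Q {α} ⊓ S := bot_le
    have hαnM : α ^ n ∈ IntermediateField.adjoin Q {α} ⊓ S := hbotle hαn
    have hγM : α ^ e ∈ IntermediateField.adjoin Q {α} ⊓ S :=
      pow_natDegree_mem hα0 hn hML hαnM hint hLqr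
    have hintγ : IsIntegral Q (α ^ e) := hint.pow e
    have hTM : IntermediateField.adjoin Q {α ^ e} ≤ IntermediateField.adjoin Q {α} ⊓ S :=
      IntermediateField.adjoin_le_iff.2 (Set.singleton_subset_iff.2 hγM)
    have hTL : IntermediateField.adjoin Q {α ^ e} ≤ IntermediateField.adjoin Q {α} :=
      hTM.trans hML
    have dM := degree_aux hint hML
    have dT := degree_aux hint hTL
    set f := (minpoly (↥(IntermediateField.adjoin Q {α ^ e})) α).natDegree with hfdef
    have hfe : f ≤ e := by
      set g : ↥(IntermediateField.adjoin Q {α ^ e}) :=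
        ⟨α ^ e, IntermediateField.mem_adjoin_simple_self Q (α ^ e)⟩ with hg
      have hd : minpoly (↥(IntermediateField.adjoin Q {α ^ e})) α ∣ X ^ e - C g := by
        apply minpoly.dvd
        simp [hg, IntermediateField.algebraMap_apply]
      have hne : (X ^ e - C g : Polynomial ↥(IntermediateField.adjoin Q {α ^ e})) ≠ 0 :=
        (Polynomial.monic_X_pow_sub_C g he0.ne').ne_zero
      calc f ≤ (X ^ e - C g : Polynomial ↥(IntermediateField.adjoin Q {α ^ e})).natDegree :=
            Polynomial.natDegree_le_of_dvd hd hne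
        _ = e := Polynomial.natDegree_X_pow_sub_C
    have hT2 : Module.finrank Q ↥(IntermediateField.adjoin Q {α ^ e}) ≤ 2 := by
      rw [IntermediateField.adjoin.finrank hintγ]
      refine minpoly_natDegree_le_two hSgal hSfin hSqr (pow_ne_zero _ hα0)
        ((show IntermediateField.adjoin Q {α} ⊓ S ≤ S from inf_le_right) hγM) hn (b := q ^ e) ?_
      rw [← pow_mul, mul_comm e n, pow_mul, ← hq, ← map_pow]
    have hmul : Module.finrank Q ↥(IntermediateField.adjoin Q {α} ⊓ S) * e
        ≤ Module.finrank Q ↥(IntermediateField.adjoin Q {α ^ e}) * e := by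
      rw [dM, ← dT]
      exact Nat.mul_le_mul_left _ hfe
    exact le_trans (Nat.le_of_mul_le_mul_right hmul he0) hT2
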